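/- Let p be a monic hyperbolic polynomial of degree m and for ε > 0 define its Nuij approximation p_ε(ζ) = (1 + ε d/dζ)^{m-1} p(ζ). Then p_ε is strictly hyperbolic, and writing p_ε(ζ) = ∏_{j=1}^m (ζ - λⱼ(ε)) with λ₁(ε) ≤ ⋯ ≤ λ_m(ε), there is a constant c > 0 depending only on m such that λ_{k+1}(ε) - λ_k(ε) ≥ c·ε for all k = 1,...,m-1 and all ε > 0. -/

import Mathlib

open Polynomial BigOperators Finset

lemma evalProd {K : Type*} [Field K] {m : ℕ} (s : Fin m → K) (x : K) :
    eval x (∏ j, (X - C (s j))) = ∏ j, (x - s j) := by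
  simp [eval_prod]

lemma derivative_finset_prod {R : Type*} [CommSemiring R] {ι : Type*} [DecidableEq ι]
    (t : Finset ι) (f : ι → R[X]) :
    derivative (∏ i ∈ t, f i) = ∑ i ∈ t, (∏ j ∈ t.erase i, f j) * derivative (f i) := by
  rw [Finset.prod_eq_multiset_prod, derivative_prod, Finset.sum_eq_multiset_sum]
  refine congrArg Multiset.sum (Multiset.map_congr rfl fun i hi => ?_)
  rw [Finset.prod_eq_multiset_prod, Finset.erase_val]

lemma evalDerivProd {K : Type*} [Field K] {m : ℕ} (s : Fin m → K) (x : K)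
    (hx : ∀ j, x ≠ s j) :
    eval x (derivative (∏ j, (X - C (s j)))) = (∏ j, (x - s j)) * ∑ j, (x - s j)⁻¹ := by
  rw [derivative_finset_prod]
  rw [eval_finset_sum, Finset.mul_sum]
  refine Finset.sum_congr rfl fun j _ => ?_
  have h1 : (x - s j) ≠ 0 := sub_ne_zero.2 (hx j)
  have h2 : (x - s j) * ∏ i ∈ univ.erase j, (x - s i) = ∏ i, (x - s i) :=
    Finset.mul_prod_erase univ (fun i => x - s i) (mem_univ j)
  simp only [derivative_X_sub_C, eval_mul, eval_one, mul_one, eval_prod, eval_sub, eval_X, eval_C]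
  field_simp
  rw [← h2]; ring

lemma evalQ {K : Type*} [Field K] {m : ℕ} (s : Fin m → K) (ε x : K)
    (hx : ∀ j, x ≠ s j) :
    eval x ((∏ j, (X - C (s j))) + C ε * derivative (∏ j, (X - C (s j))))
      = (∏ j, (x - s j)) * (1 + ε * ∑ j, (x - s j)⁻¹) := by
  rw [eval_add, eval_mul, eval_C, evalDerivProd s x hx, evalProd]
  ring

lemma prodMonic {m : ℕ} (s : Fin m → ℝ) : (∏ j, (X - C (s j))).Monic :=
  monic_prod_of_monic _ _ fun j _ => monic_X_sub_C (s j)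

lemma prodNatDegree {m : ℕ} (s : Fin m → ℝ) : (∏ j, (X - C (s j))).natDegree = m := by
  rw [natDegree_prod_of_monic _ _ fun j _ => monic_X_sub_C (s j)]
  simp

lemma qMonic {m : ℕ} (s : Fin m → ℝ) (ε : ℝ) :
    ((∏ j, (X - C (s j))) + C ε * derivative (∏ j, (X - C (s j)))).Monic ∧
    ((∏ j, (X - C (s j))) + C ε * derivative (∏ j, (X - C (s j)))).natDegree = m := by
  have hm := prodMonic s
  have h1 : degree (C ε * derivative (∏ j, (X - C (s j)))) <
      degree (∏ j, (X - C (s j))) := by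
    refine lt_of_le_of_lt ?_ (degree_derivative_lt hm.ne_zero)
    refine le_trans (degree_mul_le _ _) ?_
    refine le_trans (add_le_add degree_C_le le_rfl) ?_
    simp
  refine ⟨hm.add_of_left h1, ?_⟩
  rw [natDegree_eq_of_degree_eq (degree_add_eq_left_of_degree_lt h1), prodNatDegree]
lemma splitsStep {m : ℕ} (s : Fin m → ℝ) (ε : ℝ) (hε : 0 < ε) :
    ∃ ν : Fin m → ℝ, Monotone ν ∧
      (∏ j, (X - C (s j))) + C ε * derivative (∏ j, (X - C (s j))) = ∏ j, (X - C (ν j)) := by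
  set P : ℝ[X] := ∏ j, (X - C (s j)) with hP
  set q : ℝ[X] := P + C ε * derivative P with hq
  obtain ⟨hqm, hqd⟩ := qMonic s ε
  set f : ℝ →+* ℂ := algebraMap ℝ ℂ with hf
  have hmapP : P.map f = ∏ j, (X - C ((s j : ℂ))) := by
    simp [hP, Polynomial.map_prod, hf]
  have hmapq : q.map f = (∏ j, (X - C ((s j : ℂ)))) + C (ε:ℂ) * derivative (∏ j, (X - C ((s j:ℂ)))) := by
    rw [hq, Polynomial.map_add, Polynomial.map_mul, Polynomial.map_C, ← Polynomial.derivative_map, hmapP]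
    simp [hf]
  have hroots_real : ∀ z ∈ (q.map f).roots, z.im = 0 := by
    intro z hz
    have hz0 : eval z (q.map f) = 0 := (isRoot_of_mem_roots hz)
    by_cases hA : ∃ j, z = ((s j : ℝ) : ℂ)
    · obtain ⟨j, rfl⟩ := hA; simp
    · push_neg at hA
      rw [hmapq, evalQ _ _ _ hA] at hz0
      have hprod0 : (∏ j, (z - ((s j : ℝ):ℂ))) ≠ 0 := by
        rw [Finset.prod_ne_zero_iff]
        exact fun j _ => sub_ne_zero.2 (hA j)
      have heq : 1 + (ε:ℂ) * ∑ j, (z - ((s j:ℝ):ℂ))⁻¹ = 0 := by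
        rcases mul_eq_zero.1 hz0 with h | h
        · exact absurd h hprod0
        · exact h
      rcases isEmpty_or_nonempty (Fin m) with hm | hm
      · simp [Finset.univ_eq_empty] at heq
      by_contra him
      have him' : ∀ j, ((z - ((s j:ℝ):ℂ))⁻¹).im = -z.im / Complex.normSq (z - ((s j:ℝ):ℂ)) := by
        intro j
        rw [Complex.inv_im]
        simp [Complex.sub_im]
      have himeq := congrArg Complex.im heq
      simp only [Complex.add_im, Complex.one_im, Complex.mul_im, Complex.ofReal_re,
        Complex.ofReal_im, Complex.zero_im, zero_mul, add_zero, zero_add,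
        Complex.im_sum] at himeq
      simp only [him'] at himeq
      have hsum : ∑ j, -z.im / Complex.normSq (z - ((s j:ℝ):ℂ))
          = -z.im * ∑ j, (Complex.normSq (z - ((s j:ℝ):ℂ)))⁻¹ := by
        rw [Finset.mul_sum]
        exact Finset.sum_congr rfl fun j _ => by rw [div_eq_mul_inv]
      rw [hsum] at himeq
      have hpos : 0 < ∑ j, (Complex.normSq (z - ((s j:ℝ):ℂ)))⁻¹ := by
        refine Finset.sum_pos (fun j _ => ?_) Finset.univ_nonempty
        refine inv_pos.2 (Complex.normSq_pos.2 ?_)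
        intro hzero
        apply him
        have := congrArg Complex.im hzero
        simpa [Complex.sub_im] using this
      rcases mul_eq_zero.1 himeq with h | h
      · exact absurd h (ne_of_gt hε)
      rcases mul_eq_zero.1 h with h' | h'
      · exact him (neg_eq_zero.1 h')
      · exact absurd h' (ne_of_gt hpos)
  have hsplit : Splits (q.map f) := IsAlgClosed.splits _
  have hcard : (q.map f).roots.card = m := by
    rw [← hsplit.natDegree_eq_card_roots, natDegree_map, hqd]
  have hqc : q.map f = ((q.map f).roots.map fun a => X - C a).prod :=
    (IsAlgClosed.splits _).eq_prod_roots_of_monic (hqm.map f)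
  set R : Multiset ℝ := (q.map f).roots.map Complex.re with hR
  have hkey : q.map f = Polynomial.map f ((R.map fun a => X - C a).prod) := by
    rw [hqc, Polynomial.map_multiset_prod, hR, Multiset.map_map, Multiset.map_map]
    refine congrArg Multiset.prod (Multiset.map_congr rfl fun z hzz => ?_)
    have hzre : f z.re = z := Complex.ext (by simp [hf]) (by simp [hf, hroots_real z hzz])
    simp only [Function.comp_apply, Polynomial.map_sub, Polynomial.map_X, Polynomial.map_C, hzre]
  have key : q = (R.map fun a => X - C a).prod :=
    Polynomial.map_injective f f.injective hkey
  have hcardR : R.card = m := by rw [hR, Multiset.card_map, hcard]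
  have hL : R.toList.length = m := by rw [Multiset.length_toList, hcardR]
  set ν' : Fin m → ℝ := fun i => R.toList.get (Fin.cast hL.symm i) with hν'
  have hprod : q = ∏ i, (X - C (ν' i)) := by
    rw [key]
    conv_lhs => rw [← Multiset.coe_toList R]
    rw [Multiset.map_coe, Multiset.prod_coe]
    have h2 : R.toList.map (fun a => X - C a) = List.ofFn ((fun a => X - C a) ∘ R.toList.get) := by
      rw [← List.map_ofFn, List.ofFn_get]
    rw [h2, List.prod_ofFn]
    exact Fintype.prod_equiv (finCongr hL) _ _ fun i => rfl
  exact ⟨ν' ∘ Tuple.sort ν', Tuple.monotone_sort ν',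
    hprod.trans (Equiv.prod_comp (Tuple.sort ν') fun i => X - C (ν' i)).symm⟩
lemma evalDerivSq {q : ℝ[X]} {a : ℝ} (h : (X - C a)^2 ∣ q) : eval a (derivative q) = 0 := by
  obtain ⟨u, rfl⟩ := h
  rw [derivative_mul, eval_add, eval_mul, eval_mul]
  simp [derivative_pow, derivative_X_sub_C]

lemma qSimpleRoot {m : ℕ} (s : Fin m → ℝ) {ε a : ℝ} (hε : 0 < ε) (ha : ∀ j, a ≠ s j)
    (h0 : eval a ((∏ j, (X - C (s j))) + C ε * derivative (∏ j, (X - C (s j)))) = 0) :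
    eval a (derivative ((∏ j, (X - C (s j))) + C ε * derivative (∏ j, (X - C (s j))))) ≠ 0 := by
  rcases isEmpty_or_nonempty (Fin m) with hm | hm
  · rw [Finset.univ_eq_empty, Finset.prod_empty] at h0
    simp at h0
  set P : ℝ[X] := ∏ j, (X - C (s j)) with hP
  set q : ℝ[X] := P + C ε * derivative P with hq
  have hpa : (∏ j, (a - s j)) ≠ 0 := by
    rw [Finset.prod_ne_zero_iff]; exact fun j _ => sub_ne_zero.2 (ha j)
  have h0' : (∏ j, (a - s j)) * (1 + ε * ∑ j, (a - s j)⁻¹) = 0 := by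
    rw [← evalQ s ε a ha]; exact h0
  have hwa : 1 + ε * ∑ j, (a - s j)⁻¹ = 0 := by
    rcases mul_eq_zero.1 h0' with h | h
    · exact absurd h hpa
    · exact h
  have hw : HasDerivAt (fun x : ℝ => 1 + ε * ∑ j, (x - s j)⁻¹)
      (ε * ∑ j, -((a - s j) ^ 2)⁻¹) a := by
    refine HasDerivAt.const_add _ (HasDerivAt.const_mul _ ?_)
    refine HasDerivAt.fun_sum fun j _ => ?_
    have h1 : HasDerivAt (fun x : ℝ => x - s j) 1 a := (hasDerivAt_id a).sub_const _
    have h2 := h1.fun_inv (sub_ne_zero.2 (ha j))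
    simpa [neg_div, div_eq_mul_inv] using h2
  have hp : HasDerivAt (fun x : ℝ => eval x P) (eval a (derivative P)) a := P.hasDerivAt a
  have hmul := hp.mul hw
  rw [hwa, mul_zero, zero_add] at hmul
  have hU : ∀ᶠ x in nhds a, ∀ j, x ≠ s j := by
    have hop : IsOpen {x : ℝ | ∀ j, x ≠ s j} := by
      have he : {x : ℝ | ∀ j, x ≠ s j} = ⋂ j, {x | x ≠ s j} := by ext x; simp
      rw [he]; exact isOpen_iInter_of_finite fun j => isOpen_ne
    exact Filter.eventually_iff.2 (hop.mem_nhds ha)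
  have hEq : (fun x : ℝ => eval x q)
      =ᶠ[nhds a] (fun x => eval x P * (1 + ε * ∑ j, (x - s j)⁻¹)) := by
    filter_upwards [hU] with x hx
    rw [hq, evalQ s ε x hx, hP, evalProd]
  have hD : HasDerivAt (fun x : ℝ => eval x q)
      (eval a P * (ε * ∑ j, -((a - s j) ^ 2)⁻¹)) a := hmul.congr_of_eventuallyEq hEq
  have huniq : eval a (derivative q) = eval a P * (ε * ∑ j, -((a - s j) ^ 2)⁻¹) :=
    (q.hasDerivAt a).unique hD
  rw [hq] at huniq ⊢
  rw [huniq]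
  refine mul_ne_zero ?_ (mul_ne_zero (ne_of_gt hε) (ne_of_lt ?_))
  · rw [hP, evalProd]; exact hpa
  · refine Finset.sum_neg (fun j _ => ?_) Finset.univ_nonempty
    have hne : a - s j ≠ 0 := sub_ne_zero.2 (ha j)
    have h3 : (0:ℝ) < ((a - s j) ^ 2)⁻¹ := by positivity
    linarith
lemma sumInvStrictAnti {m : ℕ} [Nonempty (Fin m)] (s : Fin m → ℝ) {a b : ℝ} (hab : a < b)
    (hsep : ∀ j, s j < a ∨ b < s j) :
    ∑ j, (b - s j)⁻¹ < ∑ j, (a - s j)⁻¹ := by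
  refine Finset.sum_lt_sum_of_nonempty Finset.univ_nonempty fun j _ => ?_
  rcases hsep j with h | h
  · exact inv_strictAnti₀ (by linarith) (by linarith)
  · exact (inv_lt_inv_of_neg (by linarith) (by linarith)).2 (by linarith)

lemma rootUpperBound {m : ℕ} (s : Fin m → ℝ) {ε δ x : ℝ} (hε : 0 < ε) (hδ : 0 < δ)
    (hδε : δ ≤ ε) (t : Fin m)
    (hbelow : ∀ j, s j ≤ s t - δ ∨ s t ≤ s j)
    (hroot : eval x ((∏ j, (X - C (s j))) + C ε * derivative (∏ j, (X - C (s j)))) = 0)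
    (hxt : x < s t) : x ≤ s t - δ / (4 * m) := by
  have hm : 1 ≤ m := t.pos
  have hmR : (1:ℝ) ≤ m := by exact_mod_cast hm
  by_contra hcon
  push_neg at hcon
  have h4m : (0:ℝ) < 4 * m := by linarith
  have hδ4 : 0 < δ / (4 * m) := by positivity
  have hδ4δ : δ / (4 * m) ≤ δ / 2 := by
    apply div_le_div_of_nonneg_left (le_of_lt hδ) (by norm_num) (by linarith)
  have hx_ne : ∀ j, x ≠ s j := by
    intro j he
    rcases hbelow j with h | h
    · rw [he] at hcon; linarith
    · rw [he] at hxt; linarith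
  have hprod0 : (∏ j, (x - s j)) ≠ 0 := by
    rw [Finset.prod_ne_zero_iff]; exact fun j _ => sub_ne_zero.2 (hx_ne j)
  have h0' : (∏ j, (x - s j)) * (1 + ε * ∑ j, (x - s j)⁻¹) = 0 := by
    rw [← evalQ s ε x hx_ne]; exact hroot
  have hF : ∑ j, (x - s j)⁻¹ = -ε⁻¹ := by
    rcases mul_eq_zero.1 h0' with h | h
    · exact absurd h hprod0
    · have hεne : ε ≠ 0 := ne_of_gt hε
      refine mul_left_cancel₀ hεne ?_
      rw [mul_neg, mul_inv_cancel₀ hεne]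
      linarith
  have hterm_t : (x - s t)⁻¹ ≤ -((4 * m) / δ) := by
    have h1 : 0 < s t - x := by linarith
    have h2 : s t - x < δ / (4 * m) := by linarith
    have h3 : (δ / (4 * m))⁻¹ ≤ (s t - x)⁻¹ := le_of_lt (inv_strictAnti₀ h1 h2)
    have h4 : (x - s t) = -(s t - x) := by ring
    rw [h4, inv_neg]
    rw [inv_div] at h3
    linarith
  have hterm_other : ∀ j ∈ Finset.univ.erase t, (x - s j)⁻¹ ≤ 2 / δ := by
    intro j hj
    rcases hbelow j with h | h
    · have h1 : δ / 2 ≤ x - s j := by linarith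
      have h2 : (x - s j)⁻¹ ≤ (δ / 2)⁻¹ := inv_anti₀ (by linarith) h1
      rw [inv_div] at h2
      linarith
    · have h1 : x - s j < 0 := by linarith
      have h2 : (x - s j)⁻¹ < 0 := inv_neg''.2 h1
      have h3 : (0:ℝ) ≤ 2 / δ := by positivity
      linarith
  have hsum_other : ∑ j ∈ Finset.univ.erase t, (x - s j)⁻¹ ≤ (m - 1) * (2 / δ) := by
    have := Finset.sum_le_card_nsmul (Finset.univ.erase t) (fun j => (x - s j)⁻¹) (2 / δ) hterm_other
    rw [Finset.card_erase_of_mem (Finset.mem_univ t), Finset.card_univ, Fintype.card_fin] at this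
    rw [nsmul_eq_mul] at this
    have hcast : ((m - 1 : ℕ) : ℝ) = (m:ℝ) - 1 := by
      have : (1:ℕ) ≤ m := hm
      push_cast [Nat.cast_sub this]
      ring
    rw [hcast] at this
    exact this
  have hsplit : ∑ j, (x - s j)⁻¹ = (x - s t)⁻¹ + ∑ j ∈ Finset.univ.erase t, (x - s j)⁻¹ :=
    (Finset.add_sum_erase Finset.univ _ (Finset.mem_univ t)).symm
  have hεinv : ε⁻¹ ≤ δ⁻¹ := inv_anti₀ hδ hδε
  have hchain : -ε⁻¹ ≤ -((4 * m) / δ) + (m - 1) * (2 / δ) := by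
    rw [← hF, hsplit]; linarith
  have hδinv : (0:ℝ) < δ⁻¹ := inv_pos.2 hδ
  have hexp : -((4 * m) / δ) + (m - 1) * (2 / δ) = (-(2*m) - 2) * δ⁻¹ := by
    field_simp; ring
  rw [hexp] at hchain
  have hfin : -δ⁻¹ ≤ (-(2*(m:ℝ)) - 2) * δ⁻¹ := le_trans (by linarith) hchain
  nlinarith [hδinv, hmR]

lemma rootBetween {q : ℝ[X]} {x y : ℝ} (hxy : x < y) (hsign : eval x q * eval y q < 0) :
    ∃ z, x < z ∧ z < y ∧ eval z q = 0 := by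
  have hcont : ContinuousOn (fun t => eval t q) (Set.Icc x y) := q.continuousOn
  rcases lt_or_ge (eval x q) 0 with h | h
  · have hy : 0 < eval y q := by nlinarith
    obtain ⟨z, hz, hz0⟩ := intermediate_value_Ioo (le_of_lt hxy) hcont ⟨h, hy⟩
    exact ⟨z, hz.1, hz.2, hz0⟩
  · have hx : 0 < eval x q := lt_of_le_of_ne h (by intro he; rw [← he] at hsign; simp at hsign)
    have hy : eval y q < 0 := by nlinarith
    obtain ⟨z, hz, hz0⟩ := intermediate_value_Ioo' (le_of_lt hxy) hcont ⟨hy, hx⟩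
    exact ⟨z, hz.1, hz.2, hz0⟩

lemma existsRootBetween {m : ℕ} (s : Fin m → ℝ) {ε x y : ℝ} (hxy : x < y)
    (hx : 0 < 1 + ε * ∑ j, (x - s j)⁻¹) (hy : 1 + ε * ∑ j, (y - s j)⁻¹ < 0)
    (hsame : ∀ j, 0 < (x - s j) * (y - s j)) :
    ∃ z, x < z ∧ z < y ∧
      eval z ((∏ j, (X - C (s j))) + C ε * derivative (∏ j, (X - C (s j)))) = 0 := by
  have hxne : ∀ j, x ≠ s j := by
    intro j he
    have := hsame j
    rw [← he] at this
    simp at this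
  have hyne : ∀ j, y ≠ s j := by
    intro j he
    have := hsame j
    rw [← he] at this
    simp at this
  apply rootBetween hxy
  rw [evalQ s ε x hxne, evalQ s ε y hyne]
  have hpp : 0 < (∏ j, (x - s j)) * (∏ j, (y - s j)) := by
    rw [← Finset.prod_mul_distrib]; exact Finset.prod_pos fun j _ => hsame j
  have hrear : (∏ j, (x - s j)) * (1 + ε * ∑ j, (x - s j)⁻¹) *
      ((∏ j, (y - s j)) * (1 + ε * ∑ j, (y - s j)⁻¹))
      = ((∏ j, (x - s j)) * (∏ j, (y - s j))) *
        ((1 + ε * ∑ j, (x - s j)⁻¹) * (1 + ε * ∑ j, (y - s j)⁻¹)) := by ring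
  rw [hrear]
  exact mul_neg_of_pos_of_neg hpp (mul_neg_of_pos_of_neg hx hy)
lemma rootFval {m : ℕ} (s : Fin m → ℝ) {ε x : ℝ} (hε : 0 < ε) (hx : ∀ j, x ≠ s j)
    (hroot : eval x ((∏ j, (X - C (s j))) + C ε * derivative (∏ j, (X - C (s j)))) = 0) :
    ∑ j, (x - s j)⁻¹ = -ε⁻¹ := by
  have hprod0 : (∏ j, (x - s j)) ≠ 0 := by
    rw [Finset.prod_ne_zero_iff]; exact fun j _ => sub_ne_zero.2 (hx j)
  have h0' : (∏ j, (x - s j)) * (1 + ε * ∑ j, (x - s j)⁻¹) = 0 := by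
    rw [← evalQ s ε x hx]; exact hroot
  rcases mul_eq_zero.1 h0' with h | h
  · exact absurd h hprod0
  · have hεne : ε ≠ 0 := ne_of_gt hε
    refine mul_left_cancel₀ hεne ?_
    rw [mul_neg, mul_inv_cancel₀ hεne]
    linarith

lemma qAtSimple {m : ℕ} (s : Fin m → ℝ) {ε : ℝ} (hε : 0 < ε) (i : Fin m)
    (hsimple : ∀ l, l ≠ i → s l ≠ s i) :
    eval (s i) ((∏ j, (X - C (s j))) + C ε * derivative (∏ j, (X - C (s j)))) ≠ 0 := by
  have hP : eval (s i) (∏ j, (X - C (s j))) = 0 := by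
    rw [evalProd]
    exact Finset.prod_eq_zero (Finset.mem_univ i) (by simp)
  have hD : eval (s i) (derivative (∏ j, (X - C (s j))))
      = ∏ l ∈ Finset.univ.erase i, (s i - s l) := by
    rw [derivative_finset_prod, eval_finset_sum]
    rw [Finset.sum_eq_single i]
    · simp [eval_prod]
    · intro b _ hbi
      rw [derivative_X_sub_C, mul_one, eval_prod]
      refine Finset.prod_eq_zero (Finset.mem_erase.2 ⟨Ne.symm hbi, Finset.mem_univ i⟩) ?_
      simp
    · intro h; exact absurd (Finset.mem_univ i) h
  rw [eval_add, hP, zero_add, eval_mul, eval_C, hD]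
  refine mul_ne_zero (ne_of_gt hε) ?_
  rw [Finset.prod_ne_zero_iff]
  intro l hl
  exact sub_ne_zero.2 fun he => (hsimple l (Finset.mem_erase.1 hl).1) he.symm

lemma sumSplitLe {m : ℕ} (g : Fin m → ℝ) (t : Fin m) {B : ℝ} (hB : 0 ≤ B)
    (h : ∀ j, j ≠ t → g j ≤ B) : ∑ j, g j ≤ g t + m * B := by
  rw [← Finset.add_sum_erase _ g (Finset.mem_univ t)]
  have h1 : ∑ j ∈ Finset.univ.erase t, g j ≤ (Finset.univ.erase t).card • B :=
    Finset.sum_le_card_nsmul _ _ _ fun j hj => h j (Finset.mem_erase.1 hj).1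
  rw [nsmul_eq_mul] at h1
  have h2 : (((Finset.univ.erase t).card : ℕ) : ℝ) * B ≤ m * B := by
    refine mul_le_mul_of_nonneg_right ?_ hB
    have h3 : (Finset.univ.erase t).card ≤ m := by
      refine le_trans Finset.card_erase_le ?_
      rw [Finset.card_univ, Fintype.card_fin]
    exact_mod_cast h3
  linarith

lemma sumSplitGe {m : ℕ} (g : Fin m → ℝ) (t : Fin m) {B : ℝ} (hB : 0 ≤ B)
    (h : ∀ j, j ≠ t → -B ≤ g j) : g t - m * B ≤ ∑ j, g j := by
  have := sumSplitLe (fun j => -(g j)) t hB (fun j hj => neg_le.2 (h j hj))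
  rw [Finset.sum_neg_distrib] at this
  linarith
lemma invNegBound {u c : ℝ} (hc : 0 < c) (h : u ≤ -c) : -(c⁻¹) ≤ u⁻¹ := by
  have hu : u < 0 := lt_of_le_of_lt h (by linarith)
  have h2 : (-u)⁻¹ ≤ c⁻¹ := inv_anti₀ hc (by linarith)
  rw [inv_neg] at h2; linarith

set_option maxHeartbeats 2000000 in
lemma nuijStep {m : ℕ} {ε δ : ℝ} (hε : 0 < ε) (hδ : 0 < δ) (hδε : δ ≤ ε)
    {k : ℕ} (hk : k + 1 < m) (s : Fin m → ℝ) (hs : Monotone s)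
    (hgap : ∀ i j : Fin m, (i:ℕ) + 1 = (j:ℕ) → (j:ℕ) ≤ k → δ ≤ s j - s i) :
    ∃ ν : Fin m → ℝ, Monotone ν ∧
      (∏ j, (X - C (s j))) + C ε * derivative (∏ j, (X - C (s j))) = ∏ j, (X - C (ν j)) ∧
      ∀ i j : Fin m, (i:ℕ) + 1 = (j:ℕ) → (j:ℕ) ≤ k + 1 → δ / (4*m) ≤ ν j - ν i := by
  obtain ⟨ν, hν, hνq⟩ := splitsStep s ε hε
  refine ⟨ν, hν, hνq, ?_⟩
  have hm1 : 1 ≤ m := by omega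
  have hmR : (1:ℝ) ≤ (m:ℝ) := by exact_mod_cast hm1
  have h4m : (0:ℝ) < 4 * m := by linarith
  have hδ' : 0 < δ / (4*(m:ℝ)) := by positivity
  have hδ'2 : δ / (4*(m:ℝ)) ≤ δ / 2 := by
    apply div_le_div_of_nonneg_left (le_of_lt hδ) (by norm_num) (by linarith)
  have hroot_iff : ∀ x : ℝ,
      eval x ((∏ j, (X - C (s j))) + C ε * derivative (∏ j, (X - C (s j)))) = 0 ↔
      ∃ l, ν l = x := by
    intro x
    rw [hνq, evalProd, Finset.prod_eq_zero_iff]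
    constructor
    · rintro ⟨l, -, hl⟩
      exact ⟨l, by linarith [sub_eq_zero.1 hl]⟩
    · rintro ⟨l, hl⟩
      exact ⟨l, Finset.mem_univ l, by rw [hl, sub_self]⟩
  have hgap' : ∀ i j : Fin m, (i:ℕ) < (j:ℕ) → (j:ℕ) ≤ k → δ ≤ s j - s i := by
    intro i j hij hjk
    have hi1 : (i:ℕ)+1 < m := by omega
    have h1 : δ ≤ s ⟨(i:ℕ)+1, hi1⟩ - s i := hgap i ⟨(i:ℕ)+1, hi1⟩ rfl (by simpa using by omega)
    have h2 : s ⟨(i:ℕ)+1, hi1⟩ ≤ s j := hs (by rw [Fin.le_def]; simpa using by omega)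
    linarith
  have hnonroot : ∀ i : Fin m, (i:ℕ) < k → ∀ l : Fin m, ν l ≠ s i := by
    intro i hik l he
    have hsimple : ∀ l', l' ≠ i → s l' ≠ s i := by
      intro l' hl' he'
      rcases hl'.lt_or_gt with h | h
      · have := hgap' l' i (Fin.lt_def.1 h) (le_of_lt hik)
        linarith
      · have hi1 : (i:ℕ)+1 < m := by omega
        have hg1 : δ ≤ s ⟨(i:ℕ)+1, hi1⟩ - s i := hgap i ⟨(i:ℕ)+1, hi1⟩ rfl (by simpa using by omega)
        have hg2 : s ⟨(i:ℕ)+1, hi1⟩ ≤ s l' := hs (by rw [Fin.le_def]; simpa using Fin.lt_def.1 h)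
        linarith
    exact qAtSimple s hε i hsimple ((hroot_iff (s i)).2 ⟨l, he⟩)
  have hcount_le : ∀ t : Fin m, (t:ℕ) ≤ k →
      (Finset.univ.filter fun j => ν j < s t).card ≤ (t:ℕ) + 1 := by
    intro t htk
    by_contra hcon
    push_neg at hcon
    set S := Finset.univ.filter fun j => ν j < s t with hS
    set reg : Fin m → ℕ :=
      fun j => (Finset.univ.filter fun i : Fin m => (i:ℕ) < (t:ℕ) ∧ s i < ν j).card with hreg
    have hmaps : ∀ j ∈ S, reg j ∈ Finset.range ((t:ℕ)+1) := by
      intro j _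
      rw [Finset.mem_range]
      show (Finset.univ.filter fun i : Fin m => (i:ℕ) < (t:ℕ) ∧ s i < ν j).card < (t:ℕ)+1
      have hsub : (Finset.univ.filter fun i : Fin m => (i:ℕ) < (t:ℕ) ∧ s i < ν j)
          ⊆ Finset.Iio t := by
        intro l hl
        rw [Finset.mem_Iio, Fin.lt_def]
        exact (Finset.mem_filter.1 hl).2.1
      have hcc := Finset.card_le_card hsub
      rw [Fin.card_Iio] at hcc
      omega
    have hcard : (Finset.range ((t:ℕ)+1)).card < S.card := by
      rw [Finset.card_range]; omega
    obtain ⟨a, ha, b, hb, hab, hreq⟩ := Finset.exists_ne_map_eq_of_card_lt_of_maps_to hcard hmaps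
    have key : ∀ a b : Fin m, a ≠ b → a ∈ S → b ∈ S → reg a = reg b → ν a ≤ ν b → False := by
      intro a b hab ha hb hreq hle
      have hva : ν a < s t := (Finset.mem_filter.1 ha).2
      have hvb : ν b < s t := (Finset.mem_filter.1 hb).2
      have hνa_ne : ∀ j, ν a ≠ s j := by
        intro j he
        rcases lt_or_ge ((j:ℕ)) ((t:ℕ)) with h | h
        · exact hnonroot j (by omega) a he
        · have : s t ≤ s j := hs (Fin.le_def.2 h)
          linarith
      have hνb_ne : ∀ j, ν b ≠ s j := by
        intro j he
        rcases lt_or_ge ((j:ℕ)) ((t:ℕ)) with h | h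
        · exact hnonroot j (by omega) b he
        · have : s t ≤ s j := hs (Fin.le_def.2 h)
          linarith
      rcases eq_or_lt_of_le hle with heq | hlt
      · have hbmem : b ∈ Finset.univ.erase a := Finset.mem_erase.2 ⟨Ne.symm hab, Finset.mem_univ b⟩
        have hfact : ∏ j, (X - C (ν j)) = (X - C (ν a)) *
            ((X - C (ν b)) * ∏ j ∈ (Finset.univ.erase a).erase b, (X - C (ν j))) := by
          rw [← Finset.mul_prod_erase _ _ (Finset.mem_univ a), ← Finset.mul_prod_erase _ _ hbmem]
        have hdvd : (X - C (ν a))^2 ∣ (∏ j, (X - C (ν j))) := by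
          rw [hfact, ← heq]
          exact ⟨∏ j ∈ (Finset.univ.erase a).erase b, (X - C (ν j)), by ring⟩
        have hzero : eval (ν a) (derivative ((∏ j, (X - C (s j)))
            + C ε * derivative (∏ j, (X - C (s j))))) = 0 := by
          apply evalDerivSq
          rw [hνq]; exact hdvd
        exact qSimpleRoot s hε hνa_ne ((hroot_iff (ν a)).2 ⟨a, rfl⟩) hzero
      · have hsep : ∀ j, s j < ν a ∨ ν b < s j := by
          intro j
          rcases lt_or_ge ((j:ℕ)) ((t:ℕ)) with h | h
          · by_contra hc
            push_neg at hc
            obtain ⟨hc1, hc2⟩ := hc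
            have hne2 : s j ≠ ν b := fun he => hνb_ne j he.symm
            have hsubs : (Finset.univ.filter fun i : Fin m => (i:ℕ) < (t:ℕ) ∧ s i < ν a)
                ⊆ (Finset.univ.filter fun i : Fin m => (i:ℕ) < (t:ℕ) ∧ s i < ν b) := by
              intro l hl
              have hm' := Finset.mem_filter.1 hl
              exact Finset.mem_filter.2 ⟨hm'.1, hm'.2.1, lt_of_lt_of_le hm'.2.2 hle⟩
            have heqset := Finset.eq_of_subset_of_card_le hsubs (le_of_eq hreq.symm)
            have hjmem : j ∈ (Finset.univ.filter fun i : Fin m => (i:ℕ) < (t:ℕ) ∧ s i < ν b) :=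
              Finset.mem_filter.2 ⟨Finset.mem_univ j, h, lt_of_le_of_ne hc2 hne2⟩
            rw [← heqset] at hjmem
            exact absurd (Finset.mem_filter.1 hjmem).2.2 (not_lt.2 hc1)
          · right
            exact lt_of_lt_of_le hvb (hs (Fin.le_def.2 h))
        have hFa : ∑ j, (ν a - s j)⁻¹ = -ε⁻¹ :=
          rootFval s hε hνa_ne ((hroot_iff (ν a)).2 ⟨a, rfl⟩)
        have hFb : ∑ j, (ν b - s j)⁻¹ = -ε⁻¹ :=
          rootFval s hε hνb_ne ((hroot_iff (ν b)).2 ⟨b, rfl⟩)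
        have hne' : Nonempty (Fin m) := ⟨t⟩
        have hmono := sumInvStrictAnti s hlt hsep
        rw [hFa, hFb] at hmono
        exact lt_irrefl _ hmono
    rcases le_total (ν a) (ν b) with h | h
    · exact key a b hab ha hb hreq h
    · exact key b a (Ne.symm hab) hb ha hreq.symm h
  have hcount_ge : ∀ t : Fin m, (t:ℕ) ≤ k →
      (t:ℕ) + 1 ≤ (Finset.univ.filter fun j => ν j < s t).card := by
    have hδ'4 : δ / (4*(m:ℝ)) ≤ δ / 4 := by
      apply div_le_div_of_nonneg_left (le_of_lt hδ) (by norm_num) (by linarith)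
    have hεδ1 : 1 ≤ ε / δ := (one_le_div hδ).2 hδε
    have h2δ : (0:ℝ) < 2/δ := by positivity
    have hmain : ∀ n : ℕ, ∀ hn : n < m, n ≤ k →
        n + 1 ≤ (Finset.univ.filter fun j => ν j < s ⟨n, hn⟩).card := by
      intro n
      induction n with
      | zero =>
        intro hn _
        set t0 : Fin m := ⟨0, hn⟩ with ht0
        have hbot : ∀ j : Fin m, s t0 ≤ s j := fun j => hs (Fin.le_def.2 (Nat.zero_le _))
        set x := s t0 - (2*(m:ℝ)*ε + 1) with hx
        set y := s t0 - δ/(4*(m:ℝ)) with hyy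
        have h2mε : (0:ℝ) < 2*(m:ℝ)*ε := by nlinarith
        have hxy : x < y := by
          have hδε' : δ/(4*(m:ℝ)) ≤ ε := le_trans hδ'2 (by linarith)
          have hme : ε ≤ (m:ℝ)*ε := by nlinarith
          rw [hx, hyy]; linarith
        have hxbnd : ∀ j, x - s j ≤ -(2*(m:ℝ)*ε) := fun j => by
          have := hbot j; rw [hx]; linarith
        have hybnd : ∀ j, y - s j ≤ -(δ/(4*(m:ℝ))) := fun j => by
          have := hbot j; rw [hyy]; linarith
        have hxpos : 0 < 1 + ε * ∑ j, (x - s j)⁻¹ := by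
          have hterm : ∀ j ∈ Finset.univ, -((2*(m:ℝ)*ε)⁻¹) ≤ (x - s j)⁻¹ :=
            fun j _ => invNegBound h2mε (hxbnd j)
          have hsum := Finset.card_nsmul_le_sum Finset.univ _ _ hterm
          rw [Finset.card_univ, Fintype.card_fin, nsmul_eq_mul] at hsum
          have harith : (m:ℝ) * -((2*(m:ℝ)*ε)⁻¹) = -(2*ε)⁻¹ := by
            have hmne : (m:ℝ) ≠ 0 := by linarith
            field_simp
          rw [harith] at hsum
          have h1 : ε * -(2*ε)⁻¹ = -(1/2 : ℝ) := by
            field_simp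
          have h2 : ε * (-(2*ε)⁻¹) ≤ ε * ∑ j, (x - s j)⁻¹ :=
            mul_le_mul_of_nonneg_left hsum (le_of_lt hε)
          rw [h1] at h2
          linarith
        have hyneg : 1 + ε * ∑ j, (y - s j)⁻¹ < 0 := by
          have hsum : ∑ j, (y - s j)⁻¹ ≤ (y - s t0)⁻¹ + (m:ℝ) * 0 := by
            refine sumSplitLe (fun j => (y - s j)⁻¹) t0 le_rfl fun j _ => ?_
            have h1 : y - s j < 0 := lt_of_le_of_lt (hybnd j) (by linarith)
            exact le_of_lt (inv_neg''.2 h1)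
          have hyt0 : (y - s t0)⁻¹ = -(4*(m:ℝ)/δ) := by
            rw [hyy]
            rw [show s t0 - δ/(4*(m:ℝ)) - s t0 = -(δ/(4*(m:ℝ))) by ring]
            rw [inv_neg, inv_div]
          rw [hyt0, mul_zero, add_zero] at hsum
          have h1 : ε * ∑ j, (y - s j)⁻¹ ≤ ε * (-(4*(m:ℝ)/δ)) :=
            mul_le_mul_of_nonneg_left hsum (le_of_lt hε)
          have h2 : ε * (-(4*(m:ℝ)/δ)) ≤ -(4*(m:ℝ)) := by
            have h3 : 4*(m:ℝ) ≤ 4*(m:ℝ)*(ε/δ) := by nlinarith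
            have h4 : ε * (4*(m:ℝ)/δ) = 4*(m:ℝ)*(ε/δ) := by ring
            linarith [h4 ▸ h3]
          linarith
        have hsame : ∀ j, 0 < (x - s j) * (y - s j) := fun j =>
          mul_pos_of_neg_of_neg (lt_of_le_of_lt (hxbnd j) (by linarith))
            (lt_of_le_of_lt (hybnd j) (by linarith))
        obtain ⟨z, hz1, hz2, hz0⟩ := existsRootBetween s hxy hxpos hyneg hsame
        obtain ⟨l, hl⟩ := (hroot_iff z).1 hz0
        have hmem : l ∈ Finset.univ.filter fun j => ν j < s t0 :=
          Finset.mem_filter.2 ⟨Finset.mem_univ l, by rw [hl]; rw [hyy] at hz2; linarith⟩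
        have := Finset.card_pos.2 ⟨l, hmem⟩
        omega
      | succ n ih =>
        intro hn1 hk1
        have hn : n < m := by omega
        have ihc := ih hn (by omega)
        set a : Fin m := ⟨n, hn⟩ with hha
        set b : Fin m := ⟨n+1, hn1⟩ with hhb
        have hgapab : δ ≤ s b - s a := hgap a b rfl hk1
        have hab : s a ≤ s b := by linarith
        set x := s a + δ/(4*(m:ℝ)) with hx
        set y := s b - δ/(4*(m:ℝ)) with hyy
        have hxy : x < y := by rw [hx, hyy]; linarith
        have hlow : ∀ j : Fin m, (j:ℕ) < n+1 → s j ≤ s a := by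
          intro j hj
          apply hs
          rw [Fin.le_def]
          show (j:ℕ) ≤ n
          omega
        have hhigh : ∀ j : Fin m, n+1 ≤ (j:ℕ) → s b ≤ s j := by
          intro j hj
          apply hs
          rw [Fin.le_def]
          show n+1 ≤ (j:ℕ)
          omega
        have hδ2pos : (0:ℝ) < δ/2 := by linarith
        have hinvδ2 : (δ/2)⁻¹ = 2/δ := by rw [inv_div]
        have hxpos : 0 < 1 + ε * ∑ j, (x - s j)⁻¹ := by
          have hsum : (x - s a)⁻¹ - (m:ℝ) * (2/δ) ≤ ∑ j, (x - s j)⁻¹ := by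
            refine sumSplitGe (fun j => (x - s j)⁻¹) a (le_of_lt h2δ) fun j hj => ?_
            rcases lt_or_ge ((j:ℕ)) (n+1) with h | h
            · have h1 : 0 < x - s j := by
                have := hlow j h; rw [hx]; linarith
              exact le_trans (by linarith) (le_of_lt (inv_pos.2 h1))
            · have h1 : x - s j ≤ -(δ/2) := by
                have := hhigh j h; rw [hx]; linarith
              have := invNegBound hδ2pos h1
              rw [hinvδ2] at this
              exact this
          have hxa : (x - s a)⁻¹ = 4*(m:ℝ)/δ := by
            rw [hx, show s a + δ/(4*(m:ℝ)) - s a = δ/(4*(m:ℝ)) by ring, inv_div]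
          rw [hxa] at hsum
          have harith : 4*(m:ℝ)/δ - (m:ℝ)*(2/δ) = 2*(m:ℝ)/δ := by ring
          rw [harith] at hsum
          have h2mδ : (0:ℝ) < 2*(m:ℝ)/δ := by
            apply div_pos (by linarith) hδ
          have hSpos : 0 < ∑ j, (x - s j)⁻¹ := lt_of_lt_of_le h2mδ hsum
          nlinarith
        have hyneg : 1 + ε * ∑ j, (y - s j)⁻¹ < 0 := by
          have hsum : ∑ j, (y - s j)⁻¹ ≤ (y - s b)⁻¹ + (m:ℝ) * (2/δ) := by
            refine sumSplitLe (fun j => (y - s j)⁻¹) b (le_of_lt h2δ) fun j hj => ?_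
            rcases lt_or_ge ((j:ℕ)) (n+1) with h | h
            · have h1 : δ/2 ≤ y - s j := by
                have := hlow j h; rw [hyy]; linarith
              have := inv_anti₀ hδ2pos h1
              rw [hinvδ2] at this
              exact this
            · have h1 : y - s j < 0 := by
                have := hhigh j h; rw [hyy]; linarith
              exact le_trans (le_of_lt (inv_neg''.2 h1)) (le_of_lt h2δ)
          have hyb : (y - s b)⁻¹ = -(4*(m:ℝ)/δ) := by
            rw [hyy, show s b - δ/(4*(m:ℝ)) - s b = -(δ/(4*(m:ℝ))) by ring, inv_neg, inv_div]
          rw [hyb] at hsum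
          have harith : -(4*(m:ℝ)/δ) + (m:ℝ)*(2/δ) = -(2*(m:ℝ)/δ) := by ring
          rw [harith] at hsum
          have h1 : ε * ∑ j, (y - s j)⁻¹ ≤ ε * (-(2*(m:ℝ)/δ)) :=
            mul_le_mul_of_nonneg_left hsum (le_of_lt hε)
          have h2 : ε * (-(2*(m:ℝ)/δ)) ≤ -(2*(m:ℝ)) := by
            have h3 : 2*(m:ℝ) ≤ 2*(m:ℝ)*(ε/δ) := by nlinarith
            have h4 : ε * (2*(m:ℝ)/δ) = 2*(m:ℝ)*(ε/δ) := by ring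
            linarith [h4 ▸ h3]
          linarith
        have hsame : ∀ j, 0 < (x - s j) * (y - s j) := by
          intro j
          rcases lt_or_ge ((j:ℕ)) (n+1) with h | h
          · refine mul_pos ?_ ?_
            · have := hlow j h; rw [hx]; linarith
            · have := hlow j h; rw [hyy]; linarith
          · refine mul_pos_of_neg_of_neg ?_ ?_
            · have := hhigh j h; rw [hx]; linarith
            · have := hhigh j h; rw [hyy]; linarith
        obtain ⟨z, hz1, hz2, hz0⟩ := existsRootBetween s hxy hxpos hyneg hsame
        obtain ⟨l, hl⟩ := (hroot_iff z).1 hz0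
        have hlnot : l ∉ Finset.univ.filter (fun j => ν j < s a) := by
          rw [Finset.mem_filter]
          push_neg
          intro _
          rw [hl]
          rw [hx] at hz1
          linarith
        have hsubset : insert l (Finset.univ.filter (fun j => ν j < s a))
            ⊆ Finset.univ.filter (fun j => ν j < s b) := by
          intro w hw
          rcases Finset.mem_insert.1 hw with h | h
          · subst h
            refine Finset.mem_filter.2 ⟨Finset.mem_univ _, ?_⟩
            rw [hl]
            rw [hyy] at hz2
            linarith
          · have := (Finset.mem_filter.1 h).2
            exact Finset.mem_filter.2 ⟨Finset.mem_univ _, by linarith⟩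
        have hcard := Finset.card_le_card hsubset
        rw [Finset.card_insert_of_notMem hlnot] at hcard
        omega
    intro t htk
    exact hmain t.1 t.2 htk
  intro i j hij hjk1
  have htk : (i:ℕ) ≤ k := by omega
  have htm : (i:ℕ) < m := by omega
  set t : Fin m := ⟨(i:ℕ), htm⟩ with ht
  have htv : (t:ℕ) = (i:ℕ) := rfl
  have h1 : s t ≤ ν j := by
    by_contra hcon
    push_neg at hcon
    have hsub : Finset.Iic j ⊆ Finset.univ.filter (fun l => ν l < s t) := by
      intro l hl
      exact Finset.mem_filter.2 ⟨Finset.mem_univ l,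
        lt_of_le_of_lt (hν (Finset.mem_Iic.1 hl)) hcon⟩
    have hc := Finset.card_le_card hsub
    rw [Fin.card_Iic] at hc
    have h5 := hcount_le t htk
    omega
  have h2 : ν i < s t := by
    by_contra hcon
    push_neg at hcon
    have hsub : Finset.univ.filter (fun l => ν l < s t) ⊆ Finset.Iio i := by
      intro l hl
      rw [Finset.mem_Iio]
      by_contra hli
      push_neg at hli
      have hm1' := hν hli
      have hm2' := (Finset.mem_filter.1 hl).2
      linarith
    have hc := Finset.card_le_card hsub
    rw [Fin.card_Iio] at hc
    have h5 := hcount_ge t htk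
    omega
  have h3 : ν i ≤ s t - δ / (4*m) := by
    refine rootUpperBound s hε hδ hδε t ?_ ?_ h2
    · intro j'
      rcases lt_or_ge ((j':ℕ)) ((t:ℕ)) with h | h
      · left
        have := hgap' j' t h htk
        linarith
      · right; exact hs (by rw [Fin.le_def]; exact h)
    · exact (hroot_iff (ν i)).2 ⟨i, rfl⟩
  linarith [h1, h3]
set_option maxHeartbeats 1000000 in
/-- Nuij approximation: for every `m` there is `c > 0`, depending only on `m`, such
that for every monic hyperbolic `p = ∏ (ζ - Λⱼ)` of degree `m` and every `ε > 0`,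
`p_ε = (1 + ε d/dζ)^{m-1} p` factors as `∏ (ζ - λⱼ(ε))` with ordered roots satisfying
`λ_{k+1}(ε) - λ_k(ε) ≥ c·ε`; in particular `p_ε` is strictly hyperbolic. -/
theorem nuij_approximation_root_gaps (m : ℕ) :
    ∃ c > 0, ∀ Λ : Fin m → ℝ, ∀ ε : ℝ, 0 < ε →
      ∃ lam : Fin m → ℝ, Monotone lam ∧
        (fun q : Polynomial ℝ => q + C ε * derivative q)^[m - 1]
            (∏ j, (X - C (Λ j)))
          = ∏ j, (X - C (lam j)) ∧
        ∀ i j : Fin m, (i : ℕ) + 1 = (j : ℕ) → c * ε ≤ lam j - lam i := by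
  refine ⟨(1/(4*(m:ℝ)))^(m-1), ?_, ?_⟩
  · rcases Nat.eq_zero_or_pos m with rfl | hm
    · norm_num
    · have hm0 : (0:ℝ) < (m:ℝ) := by exact_mod_cast hm
      have h4 : (0:ℝ) < 4*(m:ℝ) := by linarith
      exact pow_pos (div_pos one_pos h4) _
  intro Λ ε hε
  set s0 : Fin m → ℝ := Λ ∘ Tuple.sort Λ with hs0
  have hs0m : Monotone s0 := Tuple.monotone_sort Λ
  have hprod0 : (∏ j, (X - C (Λ j))) = ∏ j, (X - C (s0 j)) :=
    (Equiv.prod_comp (Tuple.sort Λ) fun j => X - C (Λ j)).symm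
  have main : ∀ n : ℕ, n ≤ m - 1 → ∃ lam : Fin m → ℝ, Monotone lam ∧
      (fun q : Polynomial ℝ => q + C ε * derivative q)^[n] (∏ j, (X - C (Λ j)))
        = ∏ j, (X - C (lam j)) ∧
      ∀ i j : Fin m, (i:ℕ) + 1 = (j:ℕ) → (j:ℕ) ≤ n →
        ε * (1/(4*(m:ℝ)))^n ≤ lam j - lam i := by
    intro n
    induction n with
    | zero =>
      intro _
      exact ⟨s0, hs0m, by simpa using hprod0, fun i j hij hj0 => absurd hij (by omega)⟩
    | succ n ih =>
      intro hn1
      obtain ⟨lam, hlm, hle, hgaps⟩ := ih (by omega)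
      have hk : n + 1 < m := by omega
      have hm0 : (0:ℝ) < (m:ℝ) := by
        have : 0 < m := by omega
        exact_mod_cast this
      have hm1R : (1:ℝ) ≤ (m:ℝ) := by
        have : 1 ≤ m := by omega
        exact_mod_cast this
      have h4 : (0:ℝ) < 4*(m:ℝ) := by linarith
      have hδpos : 0 < ε * (1/(4*(m:ℝ)))^n := mul_pos hε (pow_pos (div_pos one_pos h4) n)
      have hδε : ε * (1/(4*(m:ℝ)))^n ≤ ε := by
        nth_rewrite 2 [← mul_one ε]
        refine mul_le_mul_of_nonneg_left ?_ hε.le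
        refine pow_le_one₀ (by positivity) ?_
        rw [div_le_one h4]; linarith
      obtain ⟨ν, hνm, hνq, hνgaps⟩ := nuijStep hε hδpos hδε hk lam hlm hgaps
      refine ⟨ν, hνm, ?_, ?_⟩
      · rw [Function.iterate_succ_apply', hle, hνq]
      · intro i j hij hjn
        have hg := hνgaps i j hij hjn
        have harith : ε * (1/(4*(m:ℝ)))^n / (4*(m:ℝ)) = ε * (1/(4*(m:ℝ)))^(n+1) := by
          rw [pow_succ]; ring
        rw [harith] at hg
        exact hg
  obtain ⟨lam, h1, h2, h3⟩ := main (m-1) le_rfl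
  refine ⟨lam, h1, h2, ?_⟩
  intro i j hij
  have hj : (j:ℕ) ≤ m - 1 := by omega
  have hfin := h3 i j hij hj
  linarith [hfin]
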